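/- If W^{≥a}[h] ≤ b for every h ∈ H, then E_{h1,h2}[⟨h1,h2⟩] − b·c(H) ≤ Σ_{|S|<a} Ĥ(S)^2 ≤ E_{h1,h2}[⟨h1,h2⟩]. -/

import Mathlib

/-- The character `χ_S(x) = ∏_{j ∈ S} x_j`, where `x ∈ {±1}^n` is modeled as
`Fin n → Bool` with `true ↦ -1`, `false ↦ 1`. -/
noncomputable def chi {n : ℕ} (S : Finset (Fin n)) (x : Fin n → Bool) : ℝ :=
  ∏ j ∈ S, (if x j then (-1 : ℝ) else 1)

/-- Fourier coefficient `f̂(S) = E_x[f(x) χ_S(x)]`, `x` uniform on `{±1}^n`. -/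
noncomputable def fCoeff {n : ℕ} (f : (Fin n → Bool) → ℝ) (S : Finset (Fin n)) : ℝ :=
  (1 / 2 ^ n : ℝ) * ∑ x : Fin n → Bool, f x * chi S x

/-- The high-degree Fourier weight `W^{≥a}[f] = ∑_{|S| ≥ a} f̂(S)^2`. -/
noncomputable def highWeight {n : ℕ} (f : (Fin n → Bool) → ℝ) (a : ℕ) : ℝ :=
  ∑ S ∈ Finset.univ.filter (fun S : Finset (Fin n) => a ≤ S.card), (fCoeff f S) ^ 2

set_option linter.unusedVariables false

lemma chi_orth {n : ℕ} (x y : Fin n → Bool) :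
    ∑ S : Finset (Fin n), chi S x * chi S y = if x = y then (2:ℝ)^n else 0 := by
  have h1 : ∀ S : Finset (Fin n), chi S x * chi S y
      = ∏ j ∈ S, ((if x j then (-1:ℝ) else 1) * (if y j then (-1:ℝ) else 1)) := by
    intro S; rw [chi, chi, ← Finset.prod_mul_distrib]
  have h2 : ∑ S : Finset (Fin n), chi S x * chi S y
      = ∏ j : Fin n, ((if x j then (-1:ℝ) else 1) * (if y j then (-1:ℝ) else 1) + 1) := by
    rw [Finset.prod_add]
    simp only [Finset.prod_const_one, mul_one]
    rw [← Finset.powerset_univ]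
    exact Finset.sum_congr rfl fun S _ => h1 S
  rw [h2]
  by_cases hxy : x = y
  · subst hxy
    simp only [if_pos rfl]
    have : ∀ j : Fin n, ((if x j then (-1:ℝ) else 1) * (if x j then (-1:ℝ) else 1) + 1) = 2 := by
      intro j; by_cases h : x j <;> simp [h] <;> norm_num
    rw [Finset.prod_congr rfl fun j _ => this j]
    simp
  · simp only [if_neg hxy]
    obtain ⟨j, hj⟩ : ∃ j, x j ≠ y j := by
      by_contra h; push_neg at h; exact hxy (funext h)
    apply Finset.prod_eq_zero (Finset.mem_univ j)
    rcases Bool.eq_false_or_eq_true (x j) with h | h <;>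
      rcases Bool.eq_false_or_eq_true (y j) with h' | h' <;>
      simp [h, h'] at hj ⊢

lemma parseval {n : ℕ} (f g : (Fin n → Bool) → ℝ) :
    ∑ S : Finset (Fin n), fCoeff f S * fCoeff g S
      = (1 / 2 ^ n : ℝ) * ∑ x : Fin n → Bool, f x * g x := by
  have key : ∀ S : Finset (Fin n), fCoeff f S * fCoeff g S
      = (1 / 2 ^ n : ℝ) * (1 / 2 ^ n : ℝ) *
        ∑ x : Fin n → Bool, ∑ y : Fin n → Bool, f x * g y * (chi S x * chi S y) := by
    intro S
    rw [fCoeff, fCoeff, mul_mul_mul_comm, Finset.sum_mul_sum]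
    congr 1
    exact Finset.sum_congr rfl fun x _ => Finset.sum_congr rfl fun y _ => by ring
  rw [Finset.sum_congr rfl fun S _ => key S, ← Finset.mul_sum, Finset.sum_comm]
  have inner : ∀ x : Fin n → Bool,
      ∑ S : Finset (Fin n), ∑ y : Fin n → Bool, f x * g y * (chi S x * chi S y)
      = f x * g x * (2:ℝ)^n := by
    intro x
    rw [Finset.sum_comm]
    have : ∀ y : Fin n → Bool,
        ∑ S : Finset (Fin n), f x * g y * (chi S x * chi S y)
        = if x = y then f x * g y * (2:ℝ)^n else 0 := by
      intro y
      rw [← Finset.mul_sum, chi_orth]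
      by_cases h : x = y <;> simp [h]
    rw [Finset.sum_congr rfl fun y _ => this y, Finset.sum_ite_eq (Finset.univ)]
    simp
  rw [Finset.sum_congr rfl fun x _ => inner x]
  have h2n : (2:ℝ)^n ≠ 0 := by positivity
  rw [← Finset.sum_mul]
  field_simp

lemma fCoeff_sum {n : ℕ} {ι : Type} [Fintype ι] (p : ι → ℝ)
    (f : ι → (Fin n → Bool) → ℝ) (S : Finset (Fin n)) :
    fCoeff (fun x => ∑ i, p i * f i x) S = ∑ i, p i * fCoeff (f i) S := by
  simp only [fCoeff, Finset.mul_sum, Finset.sum_mul]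
  rw [Finset.sum_comm]
  exact Finset.sum_congr rfl fun i _ =>
    Finset.sum_congr rfl fun x _ => by ring

/-- if `W^{≥a}[h] ≤ b` for every `h ∈ H`, then
`E_{h1,h2}⟨h1,h2⟩ − b·c(H) ≤ ∑_{|S|<a} Ĥ(S)^2 ≤ E_{h1,h2}⟨h1,h2⟩`,
where `⟨f,g⟩ = E_x[f(x)g(x)]`, `H(x) = E_h[h(x)]`, and
`c(H) = |H| · ∑_h Pr(h)^2`. -/
theorem stmt_5 (n : ℕ) (ι : Type) [Fintype ι] (p : ι → ℝ)
    (hp0 : ∀ i, 0 ≤ p i) (hp1 : ∑ i, p i = 1)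
    (f : ι → (Fin n → Bool) → ℝ)
    (hf : ∀ i x, f i x = 1 ∨ f i x = -1)
    (a : ℕ) (b : ℝ) (hW : ∀ i, highWeight (f i) a ≤ b) :
    (∑ i, ∑ j, p i * p j *
        ((1 / 2 ^ n : ℝ) * ∑ x : Fin n → Bool, f i x * f j x)) -
        b * ((Fintype.card ι : ℝ) * ∑ i, (p i) ^ 2) ≤
      ∑ S ∈ Finset.univ.filter (fun S : Finset (Fin n) => S.card < a),
        (fCoeff (fun x => ∑ i, p i * f i x) S) ^ 2 ∧
    ∑ S ∈ Finset.univ.filter (fun S : Finset (Fin n) => S.card < a),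
        (fCoeff (fun x => ∑ i, p i * f i x) S) ^ 2 ≤
      ∑ i, ∑ j, p i * p j *
        ((1 / 2 ^ n : ℝ) * ∑ x : Fin n → Bool, f i x * f j x) := by
  set F : (Fin n → Bool) → ℝ := fun x => ∑ i, p i * f i x with hF
  -- total Fourier mass equals the double expectation
  have htotal : ∑ S : Finset (Fin n), (fCoeff F S) ^ 2
      = ∑ i, ∑ j, p i * p j * ((1 / 2 ^ n : ℝ) * ∑ x : Fin n → Bool, f i x * f j x) := by
    have h1 : ∀ S : Finset (Fin n), (fCoeff F S) ^ 2
        = ∑ i, ∑ j, (p i * fCoeff (f i) S) * (p j * fCoeff (f j) S) := by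
      intro S
      rw [sq, fCoeff_sum, Finset.sum_mul_sum]
    rw [Finset.sum_congr rfl fun S _ => h1 S, Finset.sum_comm]
    refine Finset.sum_congr rfl fun i _ => ?_
    rw [Finset.sum_comm]
    refine Finset.sum_congr rfl fun j _ => ?_
    rw [← parseval, Finset.mul_sum]
    exact Finset.sum_congr rfl fun S _ => by ring
  -- split the total sum
  have hsplit : ∑ S ∈ Finset.univ.filter (fun S : Finset (Fin n) => S.card < a),
        (fCoeff F S) ^ 2
      + ∑ S ∈ Finset.univ.filter (fun S : Finset (Fin n) => ¬ S.card < a),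
        (fCoeff F S) ^ 2
      = ∑ S : Finset (Fin n), (fCoeff F S) ^ 2 :=
    Finset.sum_filter_add_sum_filter_not _ _ _
  have hnonneg : (0:ℝ) ≤ ∑ S ∈ Finset.univ.filter (fun S : Finset (Fin n) => ¬ S.card < a),
      (fCoeff F S) ^ 2 := Finset.sum_nonneg fun S _ => sq_nonneg _
  -- high part bounded by b * c(H)
  have hhigh : ∑ S ∈ Finset.univ.filter (fun S : Finset (Fin n) => ¬ S.card < a),
      (fCoeff F S) ^ 2 ≤ b * ((Fintype.card ι : ℝ) * ∑ i, (p i) ^ 2) := by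
    have hCS : ∀ S : Finset (Fin n), (fCoeff F S) ^ 2
        ≤ (∑ i, (p i)^2) * ∑ i, (fCoeff (f i) S)^2 := by
      intro S
      rw [fCoeff_sum]
      exact Finset.sum_mul_sq_le_sq_mul_sq Finset.univ p (fun i => fCoeff (f i) S)
    calc ∑ S ∈ Finset.univ.filter (fun S : Finset (Fin n) => ¬ S.card < a), (fCoeff F S) ^ 2
        ≤ ∑ S ∈ Finset.univ.filter (fun S : Finset (Fin n) => ¬ S.card < a),
            (∑ i, (p i)^2) * ∑ i, (fCoeff (f i) S)^2 :=
          Finset.sum_le_sum fun S _ => hCS S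
      _ = (∑ i, (p i)^2) * ∑ i, highWeight (f i) a := by
          rw [← Finset.mul_sum]
          simp only [highWeight]
          congr 1
          rw [Finset.sum_comm]
          exact Finset.sum_congr rfl fun i _ =>
            Finset.sum_congr (by ext S; simp [not_lt]) fun S _ => rfl
      _ ≤ (∑ i, (p i)^2) * ∑ i : ι, b := by
          refine mul_le_mul_of_nonneg_left (Finset.sum_le_sum fun i _ => hW i) ?_
          exact Finset.sum_nonneg fun i _ => sq_nonneg _
      _ = b * ((Fintype.card ι : ℝ) * ∑ i, (p i) ^ 2) := by
          rw [Finset.sum_const, Finset.card_univ]; ring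
  constructor
  · linarith
  · linarith
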